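/- arXiv:1705.10596 — 3 statements merged into one kernel-verified Lean document; each statement's English description precedes it below -/
import Mathlib

section
/- Let H and K be complex Hilbert spaces, L : H → K a bounded linear operator, and suppose g = L f† where f† ∈ H is orthogonal to the kernel of L (i.e. f† ∈ (ker L)ᗮ). For λ > 0 let f_λ = (λ·id_H + L*L)⁻¹(L* g) be the Tikhonov minimizer. Then ‖f_λ − f†‖_H → 0 as λ → 0⁺. -/
private lemma tikhonov_aux (lam a b W e : ℝ) (hlam0 : 0 < lam) (ha : 0 ≤ a)
    (hε : 0 < e) (hlamlt : lam < (e ^ 2 / 4) / (W ^ 2 + 1))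
    (hmain : lam * a ^ 2 + b ^ 2 ≤ lam * (b * W + a * (e / 2))) : a < e := by
  have h3 : lam * (a ^ 2) ≤ lam * (lam * W ^ 2 / 4 + a * (e / 2)) := by
    nlinarith [sq_nonneg (b - lam * W / 2)]
  have h4 : a ^ 2 ≤ lam * W ^ 2 / 4 + a * (e / 2) := le_of_mul_le_mul_left h3 hlam0
  have h5 : a ^ 2 ≤ lam * W ^ 2 / 2 + e ^ 2 / 4 := by nlinarith [sq_nonneg (a - e / 2)]
  have h6 : lam * W ^ 2 < e ^ 2 / 4 := by
    have h7 : lam * (W ^ 2 + 1) < e ^ 2 / 4 := (lt_div_iff₀ (by positivity)).mp hlamlt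
    nlinarith
  nlinarith [hε]

set_option maxHeartbeats 1000000 in
/-- If `g = L f†` with `f†` orthogonal to `ker L`, then the Tikhonov minimizers
`f_λ = (λ·id_H + L*L)⁻¹ (L* g)` (characterized by the regularized normal equation
`λ f_λ + L*L f_λ = L* g`) converge in norm to `f†` as `λ → 0⁺`. -/
theorem tikhonov_converges_to_solution
    {H K : Type*} [NormedAddCommGroup H] [InnerProductSpace ℂ H] [CompleteSpace H]
    [NormedAddCommGroup K] [InnerProductSpace ℂ K] [CompleteSpace K]
    (L : H →L[ℂ] K) (fdag : H)
    (hperp : fdag ∈ (LinearMap.ker (L : H →ₗ[ℂ] K))ᗮ)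
    (F : ℝ → H)
    (hF : ∀ lam : ℝ, 0 < lam →
      (lam : ℂ) • F lam + ContinuousLinearMap.adjoint L (L (F lam)) =
        ContinuousLinearMap.adjoint L (L fdag)) :
    Filter.Tendsto F (nhdsWithin 0 (Set.Ioi 0)) (nhds fdag) := by
  set A := ContinuousLinearMap.adjoint L with hA
  -- ker L = (range A)ᗮ
  have hker : LinearMap.ker (L : H →ₗ[ℂ] K) = (LinearMap.range (A : K →ₗ[ℂ] H))ᗮ := by
    ext x
    simp only [LinearMap.mem_ker, Submodule.mem_orthogonal, LinearMap.mem_range, ContinuousLinearMap.coe_coe]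
    constructor
    · rintro hx u ⟨w, rfl⟩
      rw [hA, ContinuousLinearMap.adjoint_inner_left]
      simp [hx]
    · intro h
      have h2 := h (A (L x)) ⟨L x, rfl⟩
      rw [hA, ContinuousLinearMap.adjoint_inner_left] at h2
      exact inner_self_eq_zero.mp h2
  have hclos : fdag ∈ closure ((LinearMap.range (A : K →ₗ[ℂ] H) : Submodule ℂ H) : Set H) := by
    have : fdag ∈ (LinearMap.range (A : K →ₗ[ℂ] H)).topologicalClosure := by
      rw [← Submodule.orthogonal_orthogonal_eq_closure, ← hker]
      exact hperp
    exact this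
  rw [Metric.tendsto_nhdsWithin_nhds]
  intro ε hε
  obtain ⟨w', hw'mem, hw'⟩ := Metric.mem_closure_iff.mp hclos (ε / 2) (by positivity)
  obtain ⟨w, rfl⟩ := hw'mem
  refine ⟨(ε ^ 2 / 4) / (‖w‖ ^ 2 + 1), by positivity, ?_⟩
  intro lam hlam hdist
  have hlam0 : (0 : ℝ) < lam := hlam
  have hlamlt : lam < (ε ^ 2 / 4) / (‖w‖ ^ 2 + 1) := by
    rw [Real.dist_eq, sub_zero, abs_of_pos hlam0] at hdist
    exact hdist
  set e := F lam - fdag with he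
  clear_value e
  -- regularized equation for the error
  have heq : (lam : ℂ) • e + A (L e) = (-(lam : ℂ)) • fdag := by
    have h1 := hF lam hlam0
    have h2 : (lam : ℂ) • e + A (L e)
        = ((lam : ℂ) • F lam + A (L (F lam))) - ((lam : ℂ) • fdag + A (L fdag)) := by
      simp only [he, smul_sub, map_sub]
      abel
    rw [h2, h1, neg_smul]
    abel
  -- take inner product with e
  have hip : (inner ℂ e ((lam : ℂ) • e + A (L e)) : ℂ) = inner ℂ e ((-(lam : ℂ)) • fdag) := by
    rw [heq]
  have hre1 : Complex.re (inner ℂ e ((lam : ℂ) • e + A (L e)) : ℂ)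
      = lam * ‖e‖ ^ 2 + ‖L e‖ ^ 2 := by
    rw [inner_add_right, inner_smul_right, hA, ContinuousLinearMap.adjoint_inner_right]
    simp [inner_self_eq_norm_sq_to_K, ← Complex.ofReal_pow]
  have hsplit : (inner ℂ e fdag : ℂ) = inner ℂ (L e) w + inner ℂ e (fdag - A w) := by
    rw [inner_sub_right, hA, ContinuousLinearMap.adjoint_inner_right]
    ring
  have hre2 : Complex.re (inner ℂ e ((-(lam : ℂ)) • fdag) : ℂ)
      = -lam * (Complex.re (inner ℂ (L e) w : ℂ) + Complex.re (inner ℂ e (fdag - A w) : ℂ)) := by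
    rw [inner_smul_right, hsplit]
    simp
  have hb1 : |Complex.re (inner ℂ (L e) w : ℂ)| ≤ ‖L e‖ * ‖w‖ :=
    le_trans (Complex.abs_re_le_norm _)
      (by exact norm_inner_le_norm _ _)
  have hb2 : |Complex.re (inner ℂ e (fdag - A w) : ℂ)| ≤ ‖e‖ * (ε / 2) := by
    refine le_trans (Complex.abs_re_le_norm _) ?_
    refine le_trans (norm_inner_le_norm _ _) ?_
    have hr : ‖fdag - A w‖ ≤ ε / 2 := by
      rw [dist_eq_norm] at hw'
      exact hw'.le
    exact mul_le_mul_of_nonneg_left hr (norm_nonneg _)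
  -- the main inequality
  have hmain : lam * ‖e‖ ^ 2 + ‖L e‖ ^ 2 ≤ lam * (‖L e‖ * ‖w‖ + ‖e‖ * (ε / 2)) := by
    have hre := congrArg Complex.re hip
    rw [hre1, hre2] at hre
    rw [hre]
    have h1 := (abs_le.mp hb1).1
    have h2 := (abs_le.mp hb2).1
    nlinarith [hlam0]
  -- conclude
  rw [dist_eq_norm, ← he]
  exact tikhonov_aux lam ‖e‖ ‖L e‖ ‖w‖ ε hlam0 (norm_nonneg _) hε hlamlt hmain
end

section
/- Let H and K be complex Hilbert spaces, L : H → K a bounded linear operator, g ∈ K, and suppose there exists f† ∈ H with f† ⊥ ker L and L*L f† = L* g (i.e. f† is the minimal-norm least-squares solution of L f = g). For λ > 0 let f_λ = (λ·id_H + L*L)⁻¹(L* g). Then ‖f_λ − f†‖_H → 0 as λ → 0⁺. -/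
/-- If `f†` is the minimal-norm least-squares solution of `L f = g` (i.e. `f† ⊥ ker L`
and `L*L f† = L* g`), then the Tikhonov-regularized solutions
`f_λ = (λ·id_H + L*L)⁻¹ (L* g)` (characterized by `λ f_λ + L*L f_λ = L* g`)
converge in norm to `f†` as `λ → 0⁺`. -/
theorem tikhonov_converges_to_least_squares_solution
    {H K : Type*} [NormedAddCommGroup H] [InnerProductSpace ℂ H] [CompleteSpace H]
    [NormedAddCommGroup K] [InnerProductSpace ℂ K] [CompleteSpace K]
    (L : H →L[ℂ] K) (g : K) (fdag : H)
    (hperp : fdag ∈ (LinearMap.ker (L : H →ₗ[ℂ] K))ᗮ)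
    (hnormal : ContinuousLinearMap.adjoint L (L fdag) = ContinuousLinearMap.adjoint L g)
    (F : ℝ → H)
    (hF : ∀ lam : ℝ, 0 < lam →
      (lam : ℂ) • F lam + ContinuousLinearMap.adjoint L (L (F lam)) =
        ContinuousLinearMap.adjoint L g) :
    Filter.Tendsto F (nhdsWithin 0 (Set.Ioi 0)) (nhds fdag) := by
  set T : H →L[ℂ] H := (ContinuousLinearMap.adjoint L).comp L with hTdef
  have hTapp : ∀ x : H, T x = ContinuousLinearMap.adjoint L (L x) := fun x => rfl
  -- orthogonal complement of range T is ker L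
  have horth : (LinearMap.range (T : H →ₗ[ℂ] H))ᗮ = LinearMap.ker (L : H →ₗ[ℂ] K) := by
    ext v
    simp only [Submodule.mem_orthogonal, LinearMap.mem_range, LinearMap.mem_ker,
      forall_exists_index]
    constructor
    · intro hv
      have h0 : (inner ℂ (T v) v : ℂ) = 0 := hv (T v) v rfl
      rw [hTapp, ContinuousLinearMap.adjoint_inner_left] at h0
      exact inner_self_eq_zero.mp h0
    · intro hv u x hx
      subst hx
      show (inner ℂ (T x) v : ℂ) = 0
      rw [hTapp, ContinuousLinearMap.adjoint_inner_left, show L v = 0 from hv, inner_zero_right]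
  -- fdag is in the closure of range T
  have hclos : fdag ∈ closure ((LinearMap.range (T : H →ₗ[ℂ] H) : Submodule ℂ H) : Set H) := by
    have h1 := (LinearMap.range (T : H →ₗ[ℂ] H)).orthogonal_orthogonal_eq_closure
    have h2 : fdag ∈ (LinearMap.range (T : H →ₗ[ℂ] H))ᗮᗮ := by rw [horth]; exact hperp
    rw [h1] at h2
    exact h2
  rw [Metric.tendsto_nhdsWithin_nhds]
  intro ε hε
  obtain ⟨y, hy, hyε⟩ := (SeminormedAddCommGroup.mem_closure_iff).mp hclos (ε / 2)
    (by positivity)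
  obtain ⟨h, rfl⟩ := hy
  set r : H := fdag - T h with hrdef
  have hrε : ‖r‖ < ε / 2 := hyε
  have hfd : fdag = T h + r := by rw [hrdef]; abel
  clear_value r
  refine ⟨ε ^ 2 / (4 * (‖L h‖ ^ 2 + 1)), by positivity, fun lam hlam hd => ?_⟩
  have hlam0 : (0 : ℝ) < lam := hlam
  rw [Real.dist_eq, sub_zero, abs_of_pos hlam0] at hd
  set e : H := F lam - fdag with hedef
  have hdist : dist (F lam) fdag = ‖e‖ := by rw [dist_eq_norm, hedef]
  -- the key equation: lam • e + T e = -(lam • fdag)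
  have heq : (lam : ℂ) • e + T e = -((lam : ℂ) • fdag) := by
    have h1 := hF lam hlam0
    rw [← hnormal] at h1
    rw [hedef, map_sub, smul_sub, hTapp, hTapp]
    linear_combination (norm := module) h1
  clear_value e
  -- take inner product with e
  have hin : ((lam : ℂ) * (‖e‖ : ℂ) ^ 2 + (‖L e‖ : ℂ) ^ 2 : ℂ)
      = -((lam : ℂ) * (inner ℂ (L e) (L h) + inner ℂ e r)) := by
    have h2 : (inner ℂ e ((lam : ℂ) • e + T e) : ℂ) = inner ℂ e (-((lam : ℂ) • fdag)) := by
      rw [heq]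
    rw [inner_add_right, inner_smul_right, hTapp, ContinuousLinearMap.adjoint_inner_right,
      inner_neg_right, inner_smul_right, hfd, inner_add_right, hTapp,
      ContinuousLinearMap.adjoint_inner_right] at h2
    rw [inner_self_eq_norm_sq_to_K, inner_self_eq_norm_sq_to_K] at h2
    exact h2
  -- real part
  set X : ℝ := (inner ℂ (L e) (L h) : ℂ).re with hXdef
  set Y : ℝ := (inner ℂ e r : ℂ).re with hYdef
  have hre : lam * ‖e‖ ^ 2 + ‖L e‖ ^ 2 = -(lam * (X + Y)) := by
    have := congrArg Complex.re hin
    simpa [Complex.add_re, Complex.neg_re, Complex.re_ofReal_mul, ← Complex.ofReal_pow] using this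
  have hX : |X| ≤ ‖L e‖ * ‖L h‖ := by
    refine (Complex.abs_re_le_norm _).trans ?_
    simpa using norm_inner_le_norm (𝕜 := ℂ) (L e) (L h)
  have hY : |Y| ≤ ‖e‖ * ‖r‖ := by
    refine (Complex.abs_re_le_norm _).trans ?_
    simpa using norm_inner_le_norm (𝕜 := ℂ) e r
  obtain ⟨hX1, hX2⟩ := abs_le.mp hX
  obtain ⟨hY1, hY2⟩ := abs_le.mp hY
  clear_value T X Y
  clear hF hclos horth heq hin hTapp hnormal hperp hX hY hyε hXdef hYdef hrdef hedef hfd hTdef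
  -- key estimate: ‖e‖² ≤ lam * ‖L h‖² + ‖r‖²
  have hkey : ‖e‖ ^ 2 ≤ lam * ‖L h‖ ^ 2 + ‖r‖ ^ 2 := by
    nlinarith [sq_nonneg (2 * ‖L e‖ - lam * ‖L h‖), sq_nonneg (‖e‖ - ‖r‖),
      mul_pos hlam0 hlam0, norm_nonneg e, norm_nonneg r, norm_nonneg (L e),
      norm_nonneg (L h), mul_le_mul_of_nonneg_left hX2 hlam0.le,
      mul_le_mul_of_nonneg_left hY2 hlam0.le]
  have hlt : ‖e‖ ^ 2 < ε ^ 2 := by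
    have h1 : lam * ‖L h‖ ^ 2 < ε ^ 2 / 4 := by
      have h2 : lam * (‖L h‖ ^ 2 + 1) < ε ^ 2 / 4 := by
        have h4 := (lt_div_iff₀ (show (0:ℝ) < 4 * (‖L h‖ ^ 2 + 1) by positivity)).mp hd
        nlinarith [sq_nonneg (‖L h‖)]
      have h5 : lam * ‖L h‖ ^ 2 + lam = lam * (‖L h‖ ^ 2 + 1) := by ring
      linarith
    have h3 : ‖r‖ ^ 2 < (ε / 2) ^ 2 := by
      have := norm_nonneg r
      nlinarith
    nlinarith
  rw [hdist]
  nlinarith [norm_nonneg e]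
end

section
/- Let H be a real Hilbert space, v₁, …, v_N ∈ H, A₁, …, A_N ∈ ℝ, and λ₁, …, λ_N > 0. Suppose there exists f ∈ H with ⟨v_j, f⟩ = A_j for all j = 1, …, N, and let f* be the unique element of minimal norm satisfying these interpolation conditions. For each λ > 0 let f_λ be the unique minimizer of λ‖f‖²_H + Σ_{j=1}^N λ_j (⟨v_j, f⟩ − A_j)². Then ‖f_λ − f*‖_H → 0 as λ → 0⁺. -/
open scoped InnerProductSpace

/-- If a real function tends to `0` when squared, it tends to `0`. -/
lemma tendsto_zero_of_sq_tendsto_zero {α : Type*} {l : Filter α} {f : α → ℝ}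
    (h : Filter.Tendsto (fun x => f x ^ 2) l (nhds 0)) :
    Filter.Tendsto f l (nhds 0) := by
  have habs : Filter.Tendsto (fun x => |f x|) l (nhds 0) := by
    have hsqrt : Filter.Tendsto (fun x => Real.sqrt (f x ^ 2)) l (nhds (Real.sqrt 0)) :=
      (Real.continuous_sqrt.tendsto 0).comp h
    simpa [Real.sqrt_sq_eq_abs, Real.sqrt_zero] using hsqrt
  exact tendsto_zero_iff_abs_tendsto_zero f |>.mpr habs

/-- If the interpolation conditions `⟨vⱼ, f⟩ = Aⱼ` are solvable and `f*` is the
minimal-norm interpolant, then the minimizers `f_λ` of the discrete regularized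
functional `λ‖f‖² + Σⱼ λⱼ(⟨vⱼ, f⟩ − Aⱼ)²` converge in norm to `f*` as `λ → 0⁺`. -/
theorem discrete_tikhonov_converges_to_minimal_norm_interpolant
    {H : Type*} [NormedAddCommGroup H] [InnerProductSpace ℝ H] [CompleteSpace H]
    (N : ℕ) (v : Fin N → H) (A : Fin N → ℝ)
    (lamw : Fin N → ℝ) (hlamw : ∀ j, 0 < lamw j)
    (fstar : H)
    (hfs_interp : ∀ j, ⟪v j, fstar⟫_ℝ = A j)
    (hfs_min : ∀ f : H, (∀ j, ⟪v j, f⟫_ℝ = A j) → ‖fstar‖ ≤ ‖f‖)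
    (F : ℝ → H)
    (hF : ∀ lam : ℝ, 0 < lam → ∀ f : H,
      lam * ‖F lam‖ ^ 2 + ∑ j, lamw j * (⟪v j, F lam⟫_ℝ - A j) ^ 2 ≤
        lam * ‖f‖ ^ 2 + ∑ j, lamw j * (⟪v j, f⟫_ℝ - A j) ^ 2) :
    Filter.Tendsto F (nhdsWithin 0 (Set.Ioi 0)) (nhds fstar) := by
  classical
  set l := nhdsWithin (0 : ℝ) (Set.Ioi 0) with hl
  -- Step 1: key inequality from using `fstar` as competitor
  have key : ∀ lam : ℝ, 0 < lam →
      lam * ‖F lam‖ ^ 2 + ∑ j, lamw j * (⟪v j, F lam⟫_ℝ - A j) ^ 2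
        ≤ lam * ‖fstar‖ ^ 2 := by
    intro lam hlam
    have := hF lam hlam fstar
    simpa [hfs_interp] using this
  have sum_nonneg : ∀ lam : ℝ,
      (0 : ℝ) ≤ ∑ j, lamw j * (⟪v j, F lam⟫_ℝ - A j) ^ 2 := by
    intro lam
    exact Finset.sum_nonneg fun j _ =>
      mul_nonneg (hlamw j).le (sq_nonneg _)
  -- Step 2: norm bound
  have hnorm : ∀ lam : ℝ, 0 < lam → ‖F lam‖ ^ 2 ≤ ‖fstar‖ ^ 2 := by
    intro lam hlam
    have h1 := key lam hlam
    have h2 := sum_nonneg lam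
    nlinarith
  -- Step 3: residuals tend to zero
  have hres : ∀ j, Filter.Tendsto (fun lam => ⟪v j, F lam⟫_ℝ - A j) l (nhds 0) := by
    intro j
    apply tendsto_zero_of_sq_tendsto_zero
    have hub : ∀ lam ∈ Set.Ioi (0 : ℝ),
        (⟪v j, F lam⟫_ℝ - A j) ^ 2 ≤ lam * ‖fstar‖ ^ 2 / lamw j := by
      intro lam hlam
      have h1 := key lam hlam
      have h2 : lamw j * (⟪v j, F lam⟫_ℝ - A j) ^ 2
          ≤ ∑ i, lamw i * (⟪v i, F lam⟫_ℝ - A i) ^ 2 := by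
        exact Finset.single_le_sum (f := fun i => lamw i * (⟪v i, F lam⟫_ℝ - A i) ^ 2)
          (fun i _ => mul_nonneg (hlamw i).le (sq_nonneg _)) (Finset.mem_univ j)
      have h3 : (0:ℝ) ≤ lam * ‖F lam‖ ^ 2 :=
        mul_nonneg (le_of_lt hlam) (sq_nonneg _)
      rw [le_div_iff₀ (hlamw j)]
      nlinarith
    have hub' : ∀ᶠ lam in l, (⟪v j, F lam⟫_ℝ - A j) ^ 2 ≤ lam * ‖fstar‖ ^ 2 / lamw j :=
      eventually_nhdsWithin_of_forall hub
    have hlow : ∀ᶠ lam in l, (0:ℝ) ≤ (⟪v j, F lam⟫_ℝ - A j) ^ 2 :=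
      Filter.Eventually.of_forall fun lam => sq_nonneg _
    have hlim : Filter.Tendsto (fun lam : ℝ => lam * ‖fstar‖ ^ 2 / lamw j) l (nhds 0) := by
      have : Filter.Tendsto (fun lam : ℝ => lam) l (nhds 0) :=
        tendsto_nhdsWithin_of_tendsto_nhds Filter.tendsto_id
      simpa using (this.mul_const (‖fstar‖ ^ 2)).div_const (lamw j)
    exact squeeze_zero' hlow hub' hlim
  -- Step 4: fstar lies in the span of the v j
  set V : Submodule ℝ H := Submodule.span ℝ (Set.range v) with hV
  haveI : FiniteDimensional ℝ V := FiniteDimensional.span_of_finite ℝ (Set.finite_range v)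
  haveI : CompleteSpace V := FiniteDimensional.complete ℝ V
  have hfsV : fstar ∈ V := by
    set p : H := (V.orthogonalProjectionOnto fstar : H) with hp
    have hpV : p ∈ V := (V.orthogonalProjectionOnto fstar).2
    have hqperp : fstar - p ∈ Vᗮ := V.sub_starProjection_mem_orthogonal fstar
    have hinner0 : ∀ j, ⟪v j, fstar - p⟫_ℝ = 0 := by
      intro j
      exact (Submodule.mem_orthogonal V (fstar - p)).mp hqperp (v j)
        (Submodule.subset_span ⟨j, rfl⟩)
    have hp_interp : ∀ j, ⟪v j, p⟫_ℝ = A j := by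
      intro j
      have := hinner0 j
      rw [inner_sub_right] at this
      have := sub_eq_zero.mp this
      rw [← this, hfs_interp]
    have hle : ‖fstar‖ ≤ ‖p‖ := hfs_min p hp_interp
    have hpyth : ‖fstar‖ ^ 2 = ‖p‖ ^ 2 + ‖fstar - p‖ ^ 2 := by
      have := norm_add_sq_real p (fstar - p)
      have hip : ⟪p, fstar - p⟫_ℝ = 0 := by
        have := (Submodule.mem_orthogonal V (fstar - p)).mp hqperp p hpV
        exact this
      simp only [hip] at this
      simpa using this
    have hq0 : ‖fstar - p‖ ^ 2 ≤ 0 := by nlinarith [norm_nonneg p, norm_nonneg fstar]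
    have : fstar - p = 0 := by
      have := le_antisymm hq0 (sq_nonneg _)
      have hn : ‖fstar - p‖ = 0 := by nlinarith [norm_nonneg (fstar - p)]
      exact norm_eq_zero.mp hn
    have : fstar = p := by rwa [sub_eq_zero] at this
    rw [this]; exact hpV
  obtain ⟨c, hc⟩ := (Submodule.mem_span_range_iff_exists_fun ℝ).mp hfsV
  -- Step 5: ⟪fstar, F lam⟫ → ‖fstar‖²
  have hinner_expand : ∀ x : H, ⟪fstar, x⟫_ℝ = ∑ j, c j * ⟪v j, x⟫_ℝ := by
    intro x
    rw [← hc, sum_inner]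
    congr 1
    ext j
    rw [real_inner_smul_left]
  have hAsum : ∑ j, c j * A j = ‖fstar‖ ^ 2 := by
    have := hinner_expand fstar
    simp only [hfs_interp] at this
    rw [← this, real_inner_self_eq_norm_sq]
  have hinner_tendsto : Filter.Tendsto (fun lam => ⟪fstar, F lam⟫_ℝ) l
      (nhds (‖fstar‖ ^ 2)) := by
    have : Filter.Tendsto (fun lam => ∑ j, c j * ⟪v j, F lam⟫_ℝ) l
        (nhds (∑ j, c j * A j)) := by
      apply tendsto_finset_sum
      intro j _
      have h1 : Filter.Tendsto (fun lam => ⟪v j, F lam⟫_ℝ) l (nhds (A j)) := by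
        have := (hres j).const_add (A j)
        simpa using this
      exact h1.const_mul (c j)
    rw [hAsum] at this
    simpa [hinner_expand] using this
  -- Step 6: squeeze ‖F lam - fstar‖² → 0
  have hsq : Filter.Tendsto (fun lam => ‖F lam - fstar‖ ^ 2) l (nhds 0) := by
    have hub : ∀ᶠ lam in l,
        ‖F lam - fstar‖ ^ 2 ≤ 2 * ‖fstar‖ ^ 2 - 2 * ⟪fstar, F lam⟫_ℝ := by
      apply eventually_nhdsWithin_of_forall
      intro lam hlam
      have hexp : ‖F lam - fstar‖ ^ 2
          = ‖F lam‖ ^ 2 - 2 * ⟪F lam, fstar⟫_ℝ + ‖fstar‖ ^ 2 :=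
        norm_sub_sq_real (F lam) fstar
      have hsymm : ⟪F lam, fstar⟫_ℝ = ⟪fstar, F lam⟫_ℝ := real_inner_comm _ _
      have := hnorm lam hlam
      rw [hexp, hsymm]
      linarith
    have hlow : ∀ᶠ lam in l, (0:ℝ) ≤ ‖F lam - fstar‖ ^ 2 :=
      Filter.Eventually.of_forall fun lam => sq_nonneg _
    have hlim : Filter.Tendsto (fun lam => 2 * ‖fstar‖ ^ 2 - 2 * ⟪fstar, F lam⟫_ℝ) l
        (nhds 0) := by
      have := (hinner_tendsto.const_mul (2:ℝ)).const_sub (2 * ‖fstar‖ ^ 2)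
      simpa using this
    exact squeeze_zero' hlow hub hlim
  -- conclude
  rw [tendsto_iff_norm_sub_tendsto_zero]
  exact tendsto_zero_of_sq_tendsto_zero hsq
end
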